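/- Let (Ω, F, P) be a probability space, let ξ_1, …, ξ_n be independent real-valued random variables with finite second moments, and let b_1 ≤ b_2 ≤ … ≤ b_n be positive real numbers. Then for every ε > 0 and all integers 1 ≤ m < n, P( max_{m ≤ k ≤ n} | (1/b_k) · Σ_{i=1}^{k} (ξ_i − E ξ_i) | > ε ) ≤ ε^{−2} · ( (1/b_m²) · Σ_{i=1}^{m} E(ξ_i − E ξ_i)² + Σ_{i=m+1}^{n} E(ξ_i − E ξ_i)² / b_i² ). -/

import Mathlib

open MeasureTheory ProbabilityTheory Finset

set_option linter.unusedSectionVars false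

lemma hr_mul_integrable {Ω : Type*} [MeasurableSpace Ω] {P : Measure Ω}
    {f g : Ω → ℝ} (hf : MemLp f 2 P) (hg : MemLp g 2 P) :
    Integrable (fun ω => f ω * g ω) P := by
  have h : MemLp (f • g) 1 P := hg.smul hf
  exact memLp_one_iff_integrable.mp h

lemma hr_filter_Icc (k l : ℕ) (hl : l ≤ k) :
    (Finset.Icc 1 k).filter (fun i => i ≤ l) = Finset.Icc 1 l := by
  ext i; simp only [mem_filter, mem_Icc]; omega

theorem hajek_renyi_aux
    {Ω : Type*} [MeasurableSpace Ω] (P : Measure Ω) [IsProbabilityMeasure P]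
    (η : ℕ → Ω → ℝ) (b : ℕ → ℝ)
    (hmeas : ∀ i, Measurable (η i))
    (hL2 : ∀ i, MemLp (η i) 2 P)
    (hindep : iIndepFun η P)
    (hcent : ∀ i, ∫ x, η i x ∂P = 0)
    (hb_pos : ∀ i, 1 ≤ i → 0 < b i)
    (hb_mono : ∀ i j, 1 ≤ i → i ≤ j → b i ≤ b j)
    (ε : ℝ) (hε : 0 < ε) (m n : ℕ) (hm : 1 ≤ m) (hmn : m ≤ n) :
    (P {ω | ∃ k, m ≤ k ∧ k ≤ n ∧ ε * b k < |∑ i ∈ Finset.Icc 1 k, η i ω|}).toReal ≤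
      ε⁻¹ ^ 2 * ((1 / (b m) ^ 2) * ∑ i ∈ Finset.Icc 1 m, ∫ x, (η i x) ^ 2 ∂P
        + ∑ i ∈ Finset.Icc (m + 1) n, (∫ x, (η i x) ^ 2 ∂P) / (b i) ^ 2) := by
  classical
  set S : ℕ → Ω → ℝ := fun k ω => ∑ i ∈ Finset.Icc 1 k, η i ω with hSdef
  have hSmeas : ∀ k, Measurable (S k) := fun k => Finset.measurable_sum _ fun i _ => hmeas i
  have hSL2 : ∀ k, MemLp (S k) 2 P := fun k => memLp_finset_sum _ fun i _ => hL2 i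
  have hSint : ∀ k, Integrable (S k) P := fun k => (hSL2 k).integrable one_le_two
  have hSsq_int : ∀ k, Integrable (fun ω => (S k ω) ^ 2) P := by
    intro k
    simpa [Pi.pow_apply] using (hSL2 k).integrable_sq
  have hScent : ∀ k, ∫ ω, S k ω ∂P = 0 := by
    intro k
    rw [hSdef]
    rw [integral_finset_sum _ (fun i _ => (hL2 i).integrable one_le_two)]
    simp [hcent]
  -- the first-exceedance sets
  set A : ℕ → Set Ω := fun k =>
    {ω | ε * b k < |S k ω| ∧ ∀ l, m ≤ l → l < k → |S l ω| ≤ ε * b l} with hAdef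
  have hA_meas : ∀ k, MeasurableSet (A k) := by
    intro k
    have h1 : MeasurableSet {ω | ε * b k < |S k ω|} :=
      measurableSet_lt measurable_const (hSmeas k).abs
    have h2 : ∀ l, MeasurableSet {ω | |S l ω| ≤ ε * b l} :=
      fun l => measurableSet_le (hSmeas l).abs measurable_const
    have : A k = {ω | ε * b k < |S k ω|} ∩
        ⋂ (l : ℕ) (_ : m ≤ l) (_ : l < k), {ω | |S l ω| ≤ ε * b l} := by
      ext ω; simp [hAdef, Set.mem_iInter]
    rw [this]
    exact h1.inter (MeasurableSet.iInter fun l => MeasurableSet.iInter fun _ =>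
      MeasurableSet.iInter fun _ => h2 l)
  have hA_disj0 : ∀ k k', m ≤ k → k < k' → Disjoint (A k) (A k') := by
    intro k k' hk hlt
    refine Set.disjoint_left.mpr fun ω hω hω' => ?_
    have h1 : ε * b k < |S k ω| := hω.1
    have h2 : |S k ω| ≤ ε * b k := hω'.2 k hk hlt
    linarith
  have hA_disj : Set.PairwiseDisjoint (↑(Finset.Icc m n)) A := by
    intro k hk k' hk' hne
    simp only [Finset.coe_Icc, Set.mem_Icc] at hk hk'
    rcases lt_or_gt_of_ne hne with h | h
    · exact hA_disj0 k k' hk.1 h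
    · exact (hA_disj0 k' k hk'.1 h).symm
  have hEvent : {ω | ∃ k, m ≤ k ∧ k ≤ n ∧ ε * b k < |∑ i ∈ Finset.Icc 1 k, η i ω|} =
      ⋃ k ∈ Finset.Icc m n, A k := by
    ext ω
    simp only [Set.mem_setOf_eq, Set.mem_iUnion, Finset.mem_Icc, exists_prop]
    constructor
    · rintro h
      have hex : ∃ k, m ≤ k ∧ k ≤ n ∧ ε * b k < |S k ω| := h
      set k0 := Nat.find hex with hk0
      obtain ⟨hk0m, hk0n, hk0lt⟩ := Nat.find_spec hex
      refine ⟨k0, ⟨hk0m, hk0n⟩, hk0lt, fun l hl hlk => ?_⟩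
      by_contra hcon
      push_neg at hcon
      exact Nat.find_min hex hlk ⟨hl, by omega, hcon⟩
    · rintro ⟨k, ⟨h1, h2⟩, h3, _⟩
      exact ⟨k, h1, h2, h3⟩
  have hIcc : ∀ x : ℕ, Finset.Icc 1 x = Finset.Ioc 0 x := by
    intro x; ext i; simp only [Finset.mem_Icc, Finset.mem_Ioc]; omega
  have hD : ∀ k j, k ≤ j → ∀ ω, S j ω - S k ω = ∑ i ∈ Finset.Ioc k j, η i ω := by
    intro k j hkj ω
    have h1 : (∑ i ∈ Finset.Ioc 0 k, η i ω) + ∑ i ∈ Finset.Ioc k j, η i ω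
        = ∑ i ∈ Finset.Ioc 0 j, η i ω :=
      Finset.sum_Ioc_consecutive _ (Nat.zero_le k) hkj
    rw [hSdef]; simp only [hIcc]
    linarith
  -- independence of the key cross term
  have key_indep : ∀ k j, k ≤ j →
      IndepFun ((A k).indicator (S k)) (fun ω => S j ω - S k ω) P := by
    intro k j hkj
    set T1 : Ω → (↥(Finset.Icc 1 k) → ℝ) := fun ω i => η i ω with hT1
    set T2 : Ω → (↥(Finset.Ioc k j) → ℝ) := fun ω i => η i ω with hT2
    have hdisj : Disjoint (Finset.Icc 1 k) (Finset.Ioc k j) := by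
      simp only [Finset.disjoint_left, Finset.mem_Icc, Finset.mem_Ioc]
      omega
    have hT : IndepFun T1 T2 P := hindep.indepFun_finset _ _ hdisj hmeas
    set U : ℕ → (↥(Finset.Icc 1 k) → ℝ) → ℝ :=
      fun l x => ∑ i ∈ Finset.univ.filter
        (fun i : ↥(Finset.Icc 1 k) => (i : ℕ) ≤ l), x i with hU
    have hU_meas : ∀ l, Measurable (U l) :=
      fun l => Finset.measurable_sum _ fun i _ => measurable_pi_apply i
    set C : Set (↥(Finset.Icc 1 k) → ℝ) :=
      {x | ε * b k < |U k x| ∧ ∀ l, m ≤ l → l < k → |U l x| ≤ ε * b l} with hC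
    have hC_meas : MeasurableSet C := by
      have hCeq : C = {x | ε * b k < |U k x|} ∩
          ⋂ (l : ℕ) (_ : m ≤ l) (_ : l < k), {x | |U l x| ≤ ε * b l} := by
        ext x; simp [hC, Set.mem_iInter]
      rw [hCeq]
      exact (measurableSet_lt measurable_const (hU_meas k).abs).inter
        (MeasurableSet.iInter fun l => MeasurableSet.iInter fun _ =>
          MeasurableSet.iInter fun _ => measurableSet_le (hU_meas l).abs measurable_const)
    set φ : (↥(Finset.Icc 1 k) → ℝ) → ℝ := C.indicator (U k) with hφdef
    have hφ : Measurable φ := (hU_meas k).indicator hC_meas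
    set ψ : (↥(Finset.Ioc k j) → ℝ) → ℝ := fun y => ∑ i, y i with hψdef
    have hψ : Measurable ψ := Finset.measurable_sum _ fun i _ => measurable_pi_apply i
    have hUT : ∀ l, l ≤ k → ∀ ω, U l (T1 ω) = S l ω := by
      intro l hl ω
      rw [hU, hT1]
      simp only
      rw [Finset.sum_filter,
        Finset.sum_coe_sort (Finset.Icc 1 k) (fun i => if i ≤ l then η i ω else 0),
        ← Finset.sum_filter, hr_filter_Icc k l hl]
    have hX : (A k).indicator (S k) = φ ∘ T1 := by
      funext ω
      have hmemiff : T1 ω ∈ C ↔ ω ∈ A k := by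
        rw [hC, hAdef]
        simp only [Set.mem_setOf_eq, hUT k le_rfl ω]
        constructor
        · rintro ⟨h1, h2⟩
          exact ⟨h1, fun l hl hlk => by
            rw [← hUT l (le_of_lt hlk) ω]; exact h2 l hl hlk⟩
        · rintro ⟨h1, h2⟩
          exact ⟨h1, fun l hl hlk => by
            rw [hUT l (le_of_lt hlk) ω]; exact h2 l hl hlk⟩
      by_cases h : ω ∈ A k
      · rw [Set.indicator_of_mem h, Function.comp_apply, hφdef,
          Set.indicator_of_mem (hmemiff.mpr h), hUT k le_rfl ω]
      · rw [Set.indicator_of_notMem h, Function.comp_apply, hφdef,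
          Set.indicator_of_notMem (fun hc => h (hmemiff.mp hc))]
    have hDψ : (fun ω => S j ω - S k ω) = ψ ∘ T2 := by
      funext ω
      rw [Function.comp_apply, hψdef, hT2]
      simp only
      rw [Finset.sum_coe_sort (Finset.Ioc k j) (fun i => η i ω)]
      exact hD k j hkj ω
    rw [hX, hDψ]
    exact hT.comp hφ hψ
  set v : ℕ → ℝ := fun i => ∫ x, (η i x) ^ 2 ∂P with hv
  have hv_nonneg : ∀ i, 0 ≤ v i := fun i => integral_nonneg fun x => sq_nonneg _
  set I : ℕ → ℝ := fun k => ∫ ω in A k, (S k ω) ^ 2 ∂P with hI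
  set J : ℕ → ℕ → ℝ := fun k j => ∫ ω in A k, (S j ω) ^ 2 ∂P with hJ
  set p : ℕ → ℝ := fun k => (P (A k)).toReal with hp
  have stepA : ∀ k, m ≤ k → (ε * b k) ^ 2 * p k ≤ I k := by
    intro k hk
    refine setIntegral_ge_of_const_le_real (hA_meas k) (measure_ne_top P _) ?_
      ((hSsq_int k).integrableOn)
    intro ω hω
    have h1 : ε * b k < |S k ω| := hω.1
    have h0 : 0 ≤ ε * b k := mul_nonneg hε.le (hb_pos k (le_trans hm hk)).le
    calc (ε * b k) ^ 2 ≤ |S k ω| ^ 2 := by nlinarith [abs_nonneg (S k ω)]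
      _ = (S k ω) ^ 2 := sq_abs _
  have stepB : ∀ k j, k ≤ j → I k ≤ J k j := by
    intro k j hkj
    set D : Ω → ℝ := fun ω => S j ω - S k ω with hDdef
    have hD_L2 : MemLp D 2 P := (hSL2 j).sub (hSL2 k)
    have hD_int : Integrable D P := hD_L2.integrable one_le_two
    have hD_cent : ∫ ω, D ω ∂P = 0 := by
      rw [hDdef]
      simp only
      rw [integral_sub (hSint j) (hSint k), hScent j, hScent k]
      ring
    have hcross_int : Integrable (fun ω => S k ω * D ω) P :=
      hr_mul_integrable (hSL2 k) hD_L2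
    have hDsq_int : Integrable (fun ω => (D ω) ^ 2) P := by
      simpa [Pi.pow_apply] using hD_L2.integrable_sq
    have hX_int : Integrable ((A k).indicator (S k)) P := (hSint k).indicator (hA_meas k)
    have hcross : ∫ ω in A k, S k ω * D ω ∂P = 0 := by
      have h2 : (A k).indicator (fun ω => S k ω * D ω)
          = fun ω => (A k).indicator (S k) ω * D ω := by
        funext ω
        by_cases h : ω ∈ A k <;> simp [h]
      rw [← integral_indicator (hA_meas k), h2]
      have h1 := IndepFun.integral_mul_eq_mul_integral (key_indep k j hkj)
        hX_int.aestronglyMeasurable hD_int.aestronglyMeasurable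
      change ∫ x, (A k).indicator (S k) x * D x ∂P
          = (∫ x, (A k).indicator (S k) x ∂P) * ∫ ω, D ω ∂P at h1
      simpa [Pi.mul_apply, hD_cent] using h1
    have hsplit : J k j = I k + (2 * ∫ ω in A k, S k ω * D ω ∂P
        + ∫ ω in A k, (D ω) ^ 2 ∂P) := by
      have hpt : ∀ ω, (S j ω) ^ 2 = (S k ω) ^ 2 + (2 * (S k ω * D ω) + (D ω) ^ 2) := by
        intro ω
        rw [hDdef]
        ring
      rw [hJ, hI]
      simp only
      rw [show (fun ω => (S j ω) ^ 2)
          = fun ω => (S k ω) ^ 2 + (2 * (S k ω * D ω) + (D ω) ^ 2) from funext hpt]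
      have hsum_int : Integrable (fun ω => 2 * (S k ω * D ω) + D ω ^ 2) P :=
        (hcross_int.const_mul 2).add hDsq_int
      have hc2_int : Integrable (fun ω => 2 * (S k ω * D ω)) P := hcross_int.const_mul 2
      rw [integral_add ((hSsq_int k).integrableOn) (hsum_int.integrableOn),
        integral_add (hc2_int.integrableOn) (hDsq_int.integrableOn),
        integral_const_mul]
    have hDsq_nonneg : 0 ≤ ∫ ω in A k, (D ω) ^ 2 ∂P :=
      setIntegral_nonneg (hA_meas k) fun ω _ => sq_nonneg _
    rw [hsplit, hcross]
    linarith
  have hVar : ∀ j, ∫ ω, (S j ω) ^ 2 ∂P = ∑ i ∈ Finset.Icc 1 j, v i := by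
    intro j
    have h1 : variance (fun ω => ∑ i ∈ Finset.Icc 1 j, η i ω) P
        = ∑ i ∈ Finset.Icc 1 j, variance (η i) P := by
      have h := IndepFun.variance_sum (μ := P) (X := η) (s := Finset.Icc 1 j)
        (fun i _ => hL2 i) (fun i _ i' _ hii' => hindep.indepFun hii')
      rw [← h]
      congr 1
      funext ω
      simp [Finset.sum_apply]
    have h2 : variance (S j) P = (∫ ω, (S j ω) ^ 2 ∂P) - (∫ ω, S j ω ∂P) ^ 2 := by
      have := variance_eq_sub (hSL2 j)
      simpa [Pi.pow_apply] using this
    have h3 : ∀ i, variance (η i) P = v i := by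
      intro i
      have := variance_eq_sub (hL2 i)
      simp only [Pi.pow_apply] at this
      rw [this, hcent i, hv]
      simp
    have h4 : variance (S j) P = ∑ i ∈ Finset.Icc 1 j, v i := by
      rw [show S j = fun ω => ∑ i ∈ Finset.Icc 1 j, η i ω from rfl] at *
      rw [h1]
      exact Finset.sum_congr rfl fun i _ => h3 i
    rw [← h4, h2, hScent j]
    ring
  have stepC : ∀ j, m ≤ j → j ≤ n →
      ∑ k ∈ Finset.Icc m j, J k j ≤ ∑ i ∈ Finset.Icc 1 j, v i := by
    intro j hmj hjn
    have hsub : ∀ k, k ∈ Finset.Icc m j → k ∈ Finset.Icc m n := by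
      intro k hk
      simp only [Finset.mem_Icc] at hk ⊢
      omega
    have h1 : ∑ k ∈ Finset.Icc m j, J k j
        = ∫ ω in ⋃ k ∈ Finset.Icc m j, A k, (S j ω) ^ 2 ∂P := by
      rw [integral_biUnion_finset _ (fun k _ => hA_meas k)
        (fun x hx y hy hxy => hA_disj (hsub x hx) (hsub y hy) hxy)
        (fun k _ => (hSsq_int j).integrableOn)]
    rw [h1, ← hVar j]
    refine setIntegral_le_integral (hSsq_int j) ?_
    filter_upwards with ω using sq_nonneg _
  -- telescoping coefficients
  set c : ℕ → ℝ := fun j => if j < n then 1 / (b j) ^ 2 - 1 / (b (j + 1)) ^ 2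
      else 1 / (b n) ^ 2 with hc
  have hc_nonneg : ∀ j, 1 ≤ j → 0 ≤ c j := by
    intro j hj
    rw [hc]
    simp only
    split_ifs with h
    · have h1 : 0 < b j := hb_pos j hj
      have h2 : b j ≤ b (j + 1) := hb_mono j (j + 1) hj (Nat.le_succ j)
      have h3 : 0 < b (j + 1) := lt_of_lt_of_le h1 h2
      have h4 : 1 / (b (j + 1)) ^ 2 ≤ 1 / (b j) ^ 2 := by
        apply one_div_le_one_div_of_le (pow_pos h1 2)
        exact pow_le_pow_left₀ h1.le h2 2
      linarith
    · exact div_nonneg zero_le_one (sq_nonneg _)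
  have htele : ∀ d k, n - k = d → 1 ≤ k → k ≤ n →
      ∑ j ∈ Finset.Icc k n, c j = 1 / (b k) ^ 2 := by
    intro d
    induction d with
    | zero =>
      intro k hdk hk hkn
      have hkeq : k = n := by omega
      subst hkeq
      rw [Finset.Icc_self, Finset.sum_singleton, hc]
      simp
    | succ d ih =>
      intro k hdk hk hkn
      have hkn' : k < n := by omega
      have hins : Finset.Icc k n = insert k (Finset.Icc (k + 1) n) := by
        ext i
        simp only [Finset.mem_Icc, Finset.mem_insert]
        omega
      have hknotin : k ∉ Finset.Icc (k + 1) n := by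
        simp only [Finset.mem_Icc]
        omega
      rw [hins, Finset.sum_insert hknotin, ih (k + 1) (by omega) (by omega) (by omega)]
      rw [hc]
      simp only [if_pos hkn']
      ring
  -- the main chain
  rw [hEvent, measure_biUnion_finset hA_disj (fun k _ => hA_meas k),
    ENNReal.toReal_sum (fun k _ => measure_ne_top P _)]
  have chain1 : ∑ k ∈ Finset.Icc m n, (P (A k)).toReal
      ≤ ∑ k ∈ Finset.Icc m n, ε⁻¹ ^ 2 * ((1 / (b k) ^ 2) * I k) := by
    refine Finset.sum_le_sum fun k hk => ?_
    simp only [Finset.mem_Icc] at hk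
    have hbk : 0 < b k := hb_pos k (le_trans hm hk.1)
    have t_nonneg : 0 ≤ ε⁻¹ ^ 2 * (1 / (b k) ^ 2) := by positivity
    have h2 := mul_le_mul_of_nonneg_left (stepA k hk.1) t_nonneg
    have h3 : ε⁻¹ ^ 2 * (1 / (b k) ^ 2) * ((ε * b k) ^ 2 * p k) = p k := by
      field_simp
    calc (P (A k)).toReal = p k := rfl
      _ = ε⁻¹ ^ 2 * (1 / (b k) ^ 2) * ((ε * b k) ^ 2 * p k) := h3.symm
      _ ≤ ε⁻¹ ^ 2 * (1 / (b k) ^ 2) * I k := h2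
      _ = ε⁻¹ ^ 2 * ((1 / (b k) ^ 2) * I k) := mul_assoc _ _ _
  have chain2 : ∑ k ∈ Finset.Icc m n, (1 / (b k) ^ 2) * I k
      ≤ ∑ k ∈ Finset.Icc m n, ∑ j ∈ Finset.Icc k n, c j * J k j := by
    refine Finset.sum_le_sum fun k hk => ?_
    simp only [Finset.mem_Icc] at hk
    rw [← htele (n - k) k rfl (le_trans hm hk.1) hk.2, Finset.sum_mul]
    refine Finset.sum_le_sum fun j hj => ?_
    simp only [Finset.mem_Icc] at hj
    exact mul_le_mul_of_nonneg_left (stepB k j hj.1)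
      (hc_nonneg j (le_trans (le_trans hm hk.1) hj.1))
  have chain3 : ∑ k ∈ Finset.Icc m n, ∑ j ∈ Finset.Icc k n, c j * J k j
      = ∑ j ∈ Finset.Icc m n, ∑ k ∈ Finset.Icc m j, c j * J k j := by
    refine Finset.sum_comm' ?_
    intro k j
    simp only [Finset.mem_Icc]
    omega
  have chain4 : ∑ j ∈ Finset.Icc m n, ∑ k ∈ Finset.Icc m j, c j * J k j
      ≤ ∑ j ∈ Finset.Icc m n, c j * ∑ i ∈ Finset.Icc 1 j, v i := by
    refine Finset.sum_le_sum fun j hj => ?_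
    simp only [Finset.mem_Icc] at hj
    rw [← Finset.mul_sum]
    exact mul_le_mul_of_nonneg_left (stepC j hj.1 hj.2)
      (hc_nonneg j (le_trans hm hj.1))
  have chain5 : ∑ j ∈ Finset.Icc m n, c j * ∑ i ∈ Finset.Icc 1 j, v i
      = ∑ i ∈ Finset.Icc 1 n, (1 / (b (max i m)) ^ 2) * v i := by
    have h1 : ∑ j ∈ Finset.Icc m n, c j * ∑ i ∈ Finset.Icc 1 j, v i
        = ∑ j ∈ Finset.Icc m n, ∑ i ∈ Finset.Icc 1 j, c j * v i := by
      refine Finset.sum_congr rfl fun j _ => ?_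
      rw [Finset.mul_sum]
    have h2 : ∑ j ∈ Finset.Icc m n, ∑ i ∈ Finset.Icc 1 j, c j * v i
        = ∑ i ∈ Finset.Icc 1 n, ∑ j ∈ Finset.Icc (max i m) n, c j * v i := by
      refine Finset.sum_comm' ?_
      intro j i
      simp only [Finset.mem_Icc]
      omega
    rw [h1, h2]
    refine Finset.sum_congr rfl fun i hi => ?_
    simp only [Finset.mem_Icc] at hi
    rw [← Finset.sum_mul, htele (n - max i m) (max i m) rfl (le_trans hm (le_max_right i m))
      (by omega)]
  have chain6 : ∑ i ∈ Finset.Icc 1 n, (1 / (b (max i m)) ^ 2) * v i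
      = (1 / (b m) ^ 2) * (∑ i ∈ Finset.Icc 1 m, v i)
        + ∑ i ∈ Finset.Icc (m + 1) n, v i / (b i) ^ 2 := by
    have hsplit : (∑ i ∈ Finset.Ioc 0 m, (1 / (b (max i m)) ^ 2) * v i)
        + ∑ i ∈ Finset.Ioc m n, (1 / (b (max i m)) ^ 2) * v i
        = ∑ i ∈ Finset.Ioc 0 n, (1 / (b (max i m)) ^ 2) * v i :=
      Finset.sum_Ioc_consecutive _ (Nat.zero_le m) hmn
    rw [hIcc n, ← hsplit]
    congr 1
    · rw [hIcc m, Finset.mul_sum]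
      refine Finset.sum_congr rfl fun i hi => ?_
      simp only [Finset.mem_Ioc] at hi
      rw [max_eq_right hi.2]
    · rw [show Finset.Icc (m + 1) n = Finset.Ioc m n from by
        ext i; simp only [Finset.mem_Icc, Finset.mem_Ioc]; omega]
      refine Finset.sum_congr rfl fun i hi => ?_
      simp only [Finset.mem_Ioc] at hi
      rw [max_eq_left (le_of_lt hi.1)]
      ring
  calc ∑ k ∈ Finset.Icc m n, (P (A k)).toReal
      ≤ ∑ k ∈ Finset.Icc m n, ε⁻¹ ^ 2 * ((1 / (b k) ^ 2) * I k) := chain1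
    _ = ε⁻¹ ^ 2 * ∑ k ∈ Finset.Icc m n, (1 / (b k) ^ 2) * I k := by
        rw [Finset.mul_sum]
    _ ≤ ε⁻¹ ^ 2 * ∑ k ∈ Finset.Icc m n, ∑ j ∈ Finset.Icc k n, c j * J k j := by
        exact mul_le_mul_of_nonneg_left chain2 (by positivity)
    _ = ε⁻¹ ^ 2 * ∑ j ∈ Finset.Icc m n, ∑ k ∈ Finset.Icc m j, c j * J k j := by
        rw [chain3]
    _ ≤ ε⁻¹ ^ 2 * ∑ j ∈ Finset.Icc m n, c j * ∑ i ∈ Finset.Icc 1 j, v i := by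
        exact mul_le_mul_of_nonneg_left chain4 (by positivity)
    _ = ε⁻¹ ^ 2 * ((1 / (b m) ^ 2) * (∑ i ∈ Finset.Icc 1 m, v i)
          + ∑ i ∈ Finset.Icc (m + 1) n, v i / (b i) ^ 2) := by
        rw [chain5, chain6]

/-- **The Hájek–Rényi maximal inequality.** For independent real random variables
`ξ 1, …, ξ n` with finite second moments and positive nondecreasing weights
`b 1 ≤ … ≤ b n`, the probability that the weighted centered partial sums exceed `ε`
at some index `k ∈ [m, n]` is bounded by `ε⁻² (b m⁻² ∑_{i≤m} Var + ∑_{m<i≤n} Var/b i²)`. -/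
theorem hajek_renyi_inequality
    {Ω : Type*} [MeasurableSpace Ω] (P : Measure Ω) [IsProbabilityMeasure P]
    (ξ : ℕ → Ω → ℝ) (b : ℕ → ℝ)
    (hmeas : ∀ i, Measurable (ξ i))
    (hL2 : ∀ i, MemLp (ξ i) 2 P)
    (hindep : iIndepFun ξ P)
    (hb_pos : ∀ i, 1 ≤ i → 0 < b i)
    (hb_mono : ∀ i j, 1 ≤ i → i ≤ j → b i ≤ b j)
    (ε : ℝ) (hε : 0 < ε) (m n : ℕ) (hm : 1 ≤ m) (hmn : m < n) :
    P {ω | ∃ k, m ≤ k ∧ k ≤ n ∧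
        ε < |(1 / b k) * ∑ i ∈ Finset.Icc 1 k, (ξ i ω - ∫ x, ξ i x ∂P)|} ≤
      ENNReal.ofReal (ε⁻¹ ^ 2 *
        ((1 / (b m) ^ 2) * ∑ i ∈ Finset.Icc 1 m, ∫ x, (ξ i x - ∫ y, ξ i y ∂P) ^ 2 ∂P
          + ∑ i ∈ Finset.Icc (m + 1) n,
              (∫ x, (ξ i x - ∫ y, ξ i y ∂P) ^ 2 ∂P) / (b i) ^ 2)) := by
  classical
  set η : ℕ → Ω → ℝ := fun i ω => ξ i ω - ∫ y, ξ i y ∂P with hη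
  have hmeas' : ∀ i, Measurable (η i) := fun i => (hmeas i).sub measurable_const
  have hL2' : ∀ i, MemLp (η i) 2 P := fun i => (hL2 i).sub (memLp_const _)
  have hindep' : iIndepFun η P :=
    hindep.comp (fun i x => x - ∫ y, ξ i y ∂P)
      (fun i => measurable_id.sub measurable_const)
  have hcent : ∀ i, ∫ x, η i x ∂P = 0 := by
    intro i
    rw [hη]
    simp only
    rw [integral_sub ((hL2 i).integrable one_le_two) (integrable_const _),
      integral_const]
    simp
  have hvnn : ∀ i, 0 ≤ ∫ x, (η i x) ^ 2 ∂P := fun i => integral_nonneg fun x => sq_nonneg _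
  have hRHS_nonneg : 0 ≤ ε⁻¹ ^ 2 *
      ((1 / (b m) ^ 2) * ∑ i ∈ Finset.Icc 1 m, ∫ x, (η i x) ^ 2 ∂P
        + ∑ i ∈ Finset.Icc (m + 1) n, (∫ x, (η i x) ^ 2 ∂P) / (b i) ^ 2) := by
    refine mul_nonneg (by positivity) (add_nonneg (mul_nonneg (by positivity)
      (Finset.sum_nonneg fun i _ => hvnn i))
      (Finset.sum_nonneg fun i _ => div_nonneg (hvnn i) (sq_nonneg _)))
  rw [ENNReal.le_ofReal_iff_toReal_le (measure_ne_top P _) hRHS_nonneg]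
  have hev : {ω | ∃ k, m ≤ k ∧ k ≤ n ∧
        ε < |(1 / b k) * ∑ i ∈ Finset.Icc 1 k, η i ω|}
      = {ω | ∃ k, m ≤ k ∧ k ≤ n ∧ ε * b k < |∑ i ∈ Finset.Icc 1 k, η i ω|} := by
    ext ω
    simp only [Set.mem_setOf_eq]
    refine exists_congr fun k => ?_
    refine and_congr_right fun h1 => and_congr_right fun h2 => ?_
    have hbk : 0 < b k := hb_pos k (le_trans hm h1)
    rw [abs_mul, abs_of_pos (by positivity : (0:ℝ) < 1 / b k), one_div,
      inv_mul_eq_div, lt_div_iff₀ hbk]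
  rw [hev]
  exact hajek_renyi_aux P η b hmeas' hL2' hindep' hcent hb_pos hb_mono ε hε m n hm
    (le_of_lt hmn)
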